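/- arXiv:1611.01920 — 2 statements merged into one kernel-verified Lean document; each statement's English description precedes it below -/
import Mathlib

section
/- For every integer k ≥ 2, every L-product in C_{k−1}^{(k)} is a cycle: D(P) = 0 for every L-product P. In particular, L_k is contained in the kernel of D: C_{k−1}^{(k)} → C_{k−2}^{(k)}. -/
noncomputable section

/-- The free associative `R`-algebra on noncommuting generators labelled by `Fin k`,
realized as the monoid algebra on the free monoid. -/
abbrev FA (R : Type) [CommRing R] (k : ℕ) : Type := MonoidAlgebra R (FreeMonoid (Fin k))

/-- A word in the letters `Fin k`, as an element of the free associative algebra. -/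
def wordElem (R : Type) [CommRing R] (k : ℕ) (w : List (Fin k)) : FA R k :=
  MonoidAlgebra.single (FreeMonoid.ofList w) 1

/-- `C_{n-1}^{(k)}`: the free `R`-submodule spanned by the injective words of length `n`. -/
def wordsLen (R : Type) [CommRing R] (k n : ℕ) : Submodule R (FA R k) :=
  Submodule.span R {x | ∃ w : List (Fin k), w.Nodup ∧ w.length = n ∧ x = wordElem R k w}

/-- Alternating sum of letter deletions of a single word. -/
def Dword (R : Type) [CommRing R] (k : ℕ) (w : List (Fin k)) : FA R k :=
  ∑ j : Fin w.length, ((-1 : R) ^ (j : ℕ)) • wordElem R k (w.eraseIdx (j : ℕ))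

/-- The differential `D`, extended linearly to the whole free algebra. -/
def Ddiff (R : Type) [CommRing R] (k : ℕ) : FA R k →ₗ[R] FA R k :=
  (Finsupp.lsum R fun w : FreeMonoid (Fin k) =>
    LinearMap.toSpanSingleton R (FA R k) (Dword R k (FreeMonoid.toList w)))
  ∘ₗ (MonoidAlgebra.coeffLinearEquiv R).toLinearMap

/-- `IsLie R k S x`: `x` is an iterated graded Lie bracket of the letters of `S`, every
letter of `S` appearing exactly once.  Here `[p, q] = pq - (-1)^(|p||q|) qp`. -/
inductive IsLie (R : Type) [CommRing R] (k : ℕ) : Finset (Fin k) → FA R k → Prop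
  | letter (a : Fin k) : IsLie R k {a} (wordElem R k [a])
  | bracket {S T : Finset (Fin k)} {p q : FA R k} (hST : Disjoint S T)
      (hp : IsLie R k S p) (hq : IsLie R k T q) :
      IsLie R k (S ∪ T) (p * q - ((-1 : R) ^ (S.card * T.card)) • (q * p))

/-- An `L`-product: a product `P₁ ⋯ P_m` over a set partition `[k] = S₁ ⊔ ⋯ ⊔ S_m`
with each `P i` in the submodule `L_{S i}` (so every block has at least two elements). -/
def IsLProduct (R : Type) [CommRing R] (k : ℕ) (x : FA R k) : Prop :=
  ∃ (m : ℕ) (S : Fin m → Finset (Fin k)) (P : Fin m → FA R k),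
    (∀ i, 2 ≤ (S i).card) ∧
    (∀ i, P i ∈ Submodule.span R {y : FA R k | IsLie R k (S i) y}) ∧
    (∀ i j, i ≠ j → Disjoint (S i) (S j)) ∧
    Finset.univ.biUnion S = (Finset.univ : Finset (Fin k)) ∧
    x = (List.ofFn P).prod

variable {R : Type} [CommRing R] {k : ℕ}

lemma wordElem_mul (u v : List (Fin k)) :
    wordElem R k u * wordElem R k v = wordElem R k (u ++ v) := by
  simp [wordElem, MonoidAlgebra.single_mul_single]

lemma wordElem_nil : wordElem R k [] = 1 := rfl

lemma Ddiff_wordElem (w : List (Fin k)) : Ddiff R k (wordElem R k w) = Dword R k w := by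
  rw [Ddiff, wordElem, LinearMap.comp_apply, LinearEquiv.coe_coe,
    MonoidAlgebra.coeffLinearEquiv_apply, MonoidAlgebra.coeff_single]
  erw [Finsupp.lsum_single]
  simp [LinearMap.toSpanSingleton_apply]

lemma Dword_nil : Dword R k [] = 0 := by simp [Dword]

lemma Dword_cons (a : Fin k) (w : List (Fin k)) :
    Dword R k (a :: w) = wordElem R k w - wordElem R k [a] * Dword R k w := by
  rw [Dword]
  rw [show ((a :: w).length) = w.length + 1 from rfl, Fin.sum_univ_succ]
  simp only [Fin.val_zero, pow_zero, one_smul, Fin.val_succ, List.eraseIdx]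
  rw [sub_eq_add_neg]
  congr 1
  rw [Dword, Finset.mul_sum, ← Finset.sum_neg_distrib]
  apply Finset.sum_congr rfl
  intro i _
  rw [show a :: w.eraseIdx ↑i = [a] ++ w.eraseIdx ↑i from rfl, ← wordElem_mul, pow_succ, mul_comm ((-1:R)^(i:ℕ)), mul_smul, neg_one_smul, mul_smul_comm]

lemma Dword_append (u v : List (Fin k)) :
    Dword R k (u ++ v) =
      Dword R k u * wordElem R k v
        + ((-1 : R) ^ u.length) • (wordElem R k u * Dword R k v) := by
  induction u with
  | nil => simp [Dword_nil, wordElem_nil]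
  | cons a u ih =>
      rw [show (a :: u) ++ v = a :: (u ++ v) from rfl, Dword_cons, ih, Dword_cons,
        ← wordElem_mul]
      rw [List.length_cons, pow_succ, show (a :: u) = [a] ++ u from rfl, ← wordElem_mul]
      simp only [mul_smul, neg_one_smul, smul_sub, smul_add, sub_mul, smul_neg,
        mul_add, mul_smul_comm, smul_mul_assoc, mul_assoc]
      abel

lemma Ddiff_word_mul (u : List (Fin k)) (y : FA R k) :
    Ddiff R k (wordElem R k u * y) =
      Dword R k u * y + ((-1 : R) ^ u.length) • (wordElem R k u * Ddiff R k y) := by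
  induction y using MonoidAlgebra.induction_linear with
  | zero => simp
  | add f g hf hg =>
      simp only [mul_add, map_add, hf, hg, smul_add]; abel
  | single v r =>
      have hv : (MonoidAlgebra.single v r : FA R k)
          = r • wordElem R k (FreeMonoid.toList v) := by
        simp only [wordElem]
        rw [show FreeMonoid.ofList (FreeMonoid.toList v) = v from rfl]
        rw [MonoidAlgebra.smul_single' r v 1, mul_one]
      rw [hv, mul_smul_comm, map_smul, map_smul, wordElem_mul, Ddiff_wordElem,
        Ddiff_wordElem, Dword_append]
      simp only [smul_add, mul_smul_comm, smul_smul]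
      rw [mul_comm r]

/-- Homogeneous elements of degree `n`: span of words of length `n`. -/
def Hom (R : Type) [CommRing R] (k n : ℕ) : Submodule R (FA R k) :=
  Submodule.span R {x | ∃ w : List (Fin k), w.length = n ∧ x = wordElem R k w}

lemma hom_mul {n m : ℕ} {x y : FA R k} (hx : x ∈ Hom R k n) (hy : y ∈ Hom R k m) :
    x * y ∈ Hom R k (n + m) := by
  have h : Hom R k n * Hom R k m ≤ Hom R k (n + m) := by
    rw [Hom, Hom, Submodule.span_mul_span]
    apply Submodule.span_le.2
    rintro z ⟨a, ⟨u, hu, rfl⟩, b, ⟨v, hv, rfl⟩, rfl⟩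
    exact Submodule.subset_span ⟨u ++ v, by simp [hu, hv], by rw [← wordElem_mul]⟩
  exact h (Submodule.mul_mem_mul hx hy)

lemma Ddiff_mul_of_hom {n : ℕ} {x : FA R k} (hx : x ∈ Hom R k n) (y : FA R k) :
    Ddiff R k (x * y) = Ddiff R k x * y + ((-1 : R) ^ n) • (x * Ddiff R k y) := by
  induction hx using Submodule.span_induction with
  | mem z hz =>
      obtain ⟨w, hw, rfl⟩ := hz
      rw [Ddiff_word_mul, Ddiff_wordElem, hw]
  | zero => simp
  | add a b _ _ ha hb =>
      simp only [add_mul, map_add, ha, hb, smul_add]; abel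
  | smul r a _ ha =>
      rw [smul_mul_assoc, map_smul, ha, map_smul, smul_add, smul_mul_assoc,
        smul_mul_assoc, smul_comm]

lemma isLie_card_pos {S : Finset (Fin k)} {x : FA R k} (h : IsLie R k S x) : 1 ≤ S.card := by
  induction h with
  | letter a => simp
  | bracket hST hp hq ihp ihq =>
      rw [Finset.card_union_of_disjoint hST]; omega

lemma isLie_hom {S : Finset (Fin k)} {x : FA R k} (h : IsLie R k S x) : x ∈ Hom R k S.card := by
  induction h with
  | letter a => exact Submodule.subset_span ⟨[a], by simp, rfl⟩
  | bracket hST hp hq ihp ihq =>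
      rw [Finset.card_union_of_disjoint hST]
      exact sub_mem (hom_mul ihp ihq)
        (Submodule.smul_mem _ _ (by rw [add_comm]; exact hom_mul ihq ihp))

lemma isLie_D {S : Finset (Fin k)} {x : FA R k} (h : IsLie R k S x) :
    Ddiff R k x = if S.card = 1 then 1 else 0 := by
  induction h with
  | letter a =>
      simp only [Finset.card_singleton, if_pos rfl]
      rw [Ddiff_wordElem, Dword]
      simp [wordElem_nil]
  | @bracket S T p q hST hp hq ihp ihq =>
      have hps := isLie_hom hp
      have hqt := isLie_hom hq
      have hs1 := isLie_card_pos hp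
      have ht1 := isLie_card_pos hq
      rw [Finset.card_union_of_disjoint hST]
      rw [if_neg (by omega)]
      rw [map_sub, map_smul, Ddiff_mul_of_hom hps, Ddiff_mul_of_hom hqt, ihp, ihq]
      rcases eq_or_lt_of_le hs1 with hs | hs <;> rcases eq_or_lt_of_le ht1 with ht | ht
      · rw [if_pos hs.symm, if_pos ht.symm, ← hs, ← ht]
        simp only [pow_one, one_mul, mul_one, neg_smul, one_smul, smul_add, smul_neg, smul_smul,
          neg_neg, neg_one_mul]
        abel
      · rw [if_pos hs.symm, if_neg (by omega), ← hs]
        simp only [one_mul, mul_one, pow_one, mul_zero, smul_zero, add_zero, smul_add, smul_smul,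
          ← pow_add]
        rw [Even.neg_one_pow ⟨T.card, rfl⟩]
        simp
      · rw [if_neg (by omega), if_pos ht.symm, ← ht]
        simp only [zero_mul, mul_one, mul_zero, smul_zero, zero_add, add_zero, smul_add, smul_smul]
        simp
      · rw [if_neg (by omega), if_neg (by omega)]
        simp

lemma span_isLie_hom {S : Finset (Fin k)} {x : FA R k}
    (hx : x ∈ Submodule.span R {y : FA R k | IsLie R k S y}) : x ∈ Hom R k S.card :=
  Submodule.span_le.2 (fun _ hy => isLie_hom hy) hx

lemma span_isLie_D {S : Finset (Fin k)} (hS : S.card ≠ 1) {x : FA R k}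
    (hx : x ∈ Submodule.span R {y : FA R k | IsLie R k S y}) : Ddiff R k x = 0 := by
  induction hx using Submodule.span_induction with
  | mem z hz => rw [isLie_D hz, if_neg hS]
  | zero => simp
  | add a b _ _ ha hb => rw [map_add, ha, hb, add_zero]
  | smul r a _ ha => rw [map_smul, ha, smul_zero]

lemma Ddiff_one : Ddiff R k (1 : FA R k) = 0 := by
  rw [show (1 : FA R k) = wordElem R k [] from rfl, Ddiff_wordElem, Dword_nil]

lemma Ddiff_list_prod (l : List (FA R k))
    (h : ∀ x ∈ l, (∃ n, x ∈ Hom R k n) ∧ Ddiff R k x = 0) :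
    Ddiff R k l.prod = 0 := by
  induction l with
  | nil => exact Ddiff_one
  | cons a l ih =>
      obtain ⟨⟨n, hn⟩, hda⟩ := h a List.mem_cons_self
      rw [List.prod_cons, Ddiff_mul_of_hom hn, hda, zero_mul, zero_add,
        ih (fun x hx => h x (List.mem_cons_of_mem a hx)), mul_zero, smul_zero]

/-- Every `L`-product in `C_{k-1}^{(k)}` is a cycle; in particular `L_k ⊆ ker D`. -/
theorem LProducts_are_cycles (k : ℕ) (hk : 2 ≤ k) :
    (∀ x : FA ℤ k, IsLProduct ℤ k x → Ddiff ℤ k x = 0) ∧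
    Submodule.span ℤ {x : FA ℤ k | IsLie ℤ k Finset.univ x} ≤ LinearMap.ker (Ddiff ℤ k) := by
  constructor
  · rintro x ⟨m, S, P, hcard, hmem, _, _, rfl⟩
    apply Ddiff_list_prod
    intro y hy
    obtain ⟨i, rfl⟩ := List.mem_ofFn.1 hy
    exact ⟨⟨(S i).card, span_isLie_hom (hmem i)⟩,
      span_isLie_D (by have := hcard i; omega) (hmem i)⟩
  · intro x hx
    rw [LinearMap.mem_ker]
    exact span_isLie_D (by simp [Finset.card_univ]; omega) hx
end
end

section
/- Let d ≥ 0 and 0 ≤ b ≤ d with b ≡ d (mod 2). Then the ℤ-linear map Φ_b is injective and its image T_d^b is contained in T_d; consequently, T_d^b is isomorphic as an abelian group to the direct sum, over all ordered decompositions [d] = B ⊔ A_1 ⊔ ⋯ ⊔ A_{(d−b)/2} with |B| = b and |A_i| = 2 (the pairs listed in order), of the groups T_B. -/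
noncomputable section

/-- For a two-element set `A = {a,b}`, `pairElem A = ab + ba`. -/
def pairElem (d : ℕ) (A : Finset (Fin d)) : FA ℤ d :=
  ∑ x ∈ A, ∑ y ∈ A.erase x, wordElem ℤ d [x, y]

/-- The free ℤ-module on injective words using exactly the letters of `B`. -/
def wordsOn (d : ℕ) (B : Finset (Fin d)) : Submodule ℤ (FA ℤ d) :=
  Submodule.span ℤ {x | ∃ w : List (Fin d), w.Nodup ∧ w.toFinset = B ∧ x = wordElem ℤ d w}

/-- `T_B`: the kernel of the differential `D` on the words using exactly the letters
of `B` (for `B = ∅` this is `ℤ`, spanned by the empty word). -/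
def TT (d : ℕ) (B : Finset (Fin d)) : Submodule ℤ (FA ℤ d) :=
  wordsOn d B ⊓ LinearMap.ker (Ddiff ℤ d)

/-- An ordered decomposition `C = B ⊔ A₁ ⊔ ⋯ ⊔ A_m` with `|B| = b`, `|A_i| = 2`, the
pairs listed in order (`m = (|C| - b)/2`). -/
structure DecompIdx (d : ℕ) (C : Finset (Fin d)) (b : ℕ) where
  B : Finset (Fin d)
  A : Fin ((C.card - b) / 2) → Finset (Fin d)
  hB : B.card = b
  hA : ∀ i, (A i).card = 2
  hAdisj : ∀ i j, i ≠ j → Disjoint (A i) (A j)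
  hBA : ∀ i, Disjoint B (A i)
  hcover : B ∪ Finset.univ.biUnion A = C

noncomputable instance (d : ℕ) (C : Finset (Fin d)) (b : ℕ) :
    DecidableEq (DecompIdx d C b) := Classical.decEq _

/-- The map `Φ_b^C`: on the summand indexed by the ordered decomposition
`(B; A₁, …, A_m)` it sends `t ∈ T_B` to the product `t · [A₁] · [A₂] ⋯ [A_m]`. -/
def Phi (d : ℕ) (C : Finset (Fin d)) (b : ℕ) :
    DirectSum (DecompIdx d C b) (fun p => ↥(TT d p.B)) →ₗ[ℤ] FA ℤ d :=
  DirectSum.toModule ℤ (DecompIdx d C b) (FA ℤ d) fun p =>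
    (LinearMap.mulRight ℤ ((List.ofFn fun i => pairElem d (p.A i)).prod)).comp
      (TT d p.B).subtype

namespace Scratch

open Finset List FreeMonoid

variable {d : ℕ}

/-- The submodule of elements whose support lies in `S`. -/
def SuppIn (d : ℕ) (S : Set (FreeMonoid (Fin d))) : Submodule ℤ (FA ℤ d) where
  carrier := {f | ∀ m ∈ f.coeff.support, m ∈ S}
  add_mem' := by
    classical
    intro f g hf hg m hm
    rw [MonoidAlgebra.coeff_add] at hm
    rcases Finset.mem_union.mp (Finsupp.support_add hm) with h | h
    exacts [hf m h, hg m h]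
  zero_mem' := by simp
  smul_mem' := by
    intro c f hf m hm
    rw [MonoidAlgebra.coeff_smul] at hm
    exact hf m (Finsupp.support_smul hm)

lemma mem_SuppIn {S : Set (FreeMonoid (Fin d))} {f : FA ℤ d} :
    f ∈ SuppIn d S ↔ ∀ m ∈ f.coeff.support, m ∈ S := by
  constructor <;> exact fun h => h

lemma SuppIn_mono {S T : Set (FreeMonoid (Fin d))} (h : S ⊆ T) : SuppIn d S ≤ SuppIn d T := by
  intro f hf
  rw [mem_SuppIn] at hf ⊢
  exact fun m hm => h (hf m hm)

lemma SuppIn.mul {S T : Set (FreeMonoid (Fin d))} {f g : FA ℤ d}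
    (hf : f ∈ SuppIn d S) (hg : g ∈ SuppIn d T) :
    f * g ∈ SuppIn d {m | ∃ a ∈ S, ∃ b ∈ T, a * b = m} := by
  classical
  rw [mem_SuppIn] at hf hg ⊢
  intro m hm
  have h := MonoidAlgebra.support_coeff_mul_subset f g hm
  rw [Finset.mem_mul] at h
  obtain ⟨y, hy, z, hz, rfl⟩ := h
  exact ⟨y, hf y hy, z, hg z hz, rfl⟩


/-- Injective words with letter set `B`. -/
def IW (d : ℕ) (B : Finset (Fin d)) : Set (FreeMonoid (Fin d)) :=
  {m | (FreeMonoid.toList m).Nodup ∧ (FreeMonoid.toList m).toFinset = B}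

lemma wordsOn_le_suppIn (B : Finset (Fin d)) : wordsOn d B ≤ SuppIn d (IW d B) := by
  rw [wordsOn, Submodule.span_le]
  rintro x ⟨w, hnd, hfs, rfl⟩
  rw [SetLike.mem_coe, mem_SuppIn]
  intro m hm
  rw [wordElem, MonoidAlgebra.coeff_single] at hm
  have h := Finsupp.support_single_subset hm
  rw [Finset.mem_singleton] at h
  subst h
  exact ⟨hnd, hfs⟩

lemma IW_length {B : Finset (Fin d)} {m : FreeMonoid (Fin d)} (hm : m ∈ IW d B) :
    (FreeMonoid.toList m).length = B.card := by
  rw [← hm.2, List.toFinset_card_of_nodup hm.1]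

/-- Property of a pair word. -/
def PairP (d : ℕ) (v : List (Fin d)) (A : Finset (Fin d)) : Prop :=
  v.length = 2 ∧ v.Nodup ∧ v.toFinset = A

lemma pairElem_suppIn {A : Finset (Fin d)} (hA : A.card = 2) :
    pairElem d A ∈ SuppIn d {m | PairP d (FreeMonoid.toList m) A} := by
  classical
  rw [mem_SuppIn]
  intro m hm
  simp only [pairElem, MonoidAlgebra.coeff_sum] at hm
  obtain ⟨x, hx, hm⟩ := Finset.mem_biUnion.mp (Finsupp.support_finset_sum hm)
  obtain ⟨y, hy, hm⟩ := Finset.mem_biUnion.mp (Finsupp.support_finset_sum hm)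
  rw [wordElem, MonoidAlgebra.coeff_single] at hm
  have h := Finsupp.support_single_subset hm
  rw [Finset.mem_singleton] at h
  subst h
  have hyx : y ≠ x := Finset.ne_of_mem_erase hy
  have hyA : y ∈ A := Finset.mem_of_mem_erase hy
  refine ⟨rfl, by simp [hyx.symm], ?_⟩
  have heq : ({x, y} : Finset (Fin d)) = A := by
    apply Finset.eq_of_subset_of_card_le
    · intro z hz
      rcases Finset.mem_insert.mp hz with rfl | hz
      · exact hx
      · rwa [Finset.mem_singleton.mp hz]
    · rw [hA, Finset.card_insert_of_notMem (by simpa using hyx.symm), Finset.card_singleton]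
  simpa using heq

lemma pairElem_suppIn_len (A : Finset (Fin d)) :
    pairElem d A ∈ SuppIn d {m | (FreeMonoid.toList m).length = 2} := by
  classical
  rw [mem_SuppIn]
  intro m hm
  simp only [pairElem, MonoidAlgebra.coeff_sum] at hm
  obtain ⟨x, hx, hm⟩ := Finset.mem_biUnion.mp (Finsupp.support_finset_sum hm)
  obtain ⟨y, hy, hm⟩ := Finset.mem_biUnion.mp (Finsupp.support_finset_sum hm)
  rw [wordElem, MonoidAlgebra.coeff_single] at hm
  have h := Finsupp.support_single_subset hm
  rw [Finset.mem_singleton] at h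
  subst h
  rfl

lemma one_suppIn : (1 : FA ℤ d) ∈ SuppIn d {m | FreeMonoid.toList m = []} := by
  rw [mem_SuppIn]
  intro m hm
  rw [MonoidAlgebra.one_def, MonoidAlgebra.coeff_single] at hm
  have h := Finsupp.support_single_subset hm
  rw [Finset.mem_singleton] at h
  subst h
  rfl

lemma prod_pair_suppIn (As : List (Finset (Fin d))) (hAs : ∀ A ∈ As, A.card = 2) :
    (As.map (pairElem d)).prod ∈ SuppIn d
      {m | ∃ vss : List (List (Fin d)), FreeMonoid.toList m = vss.flatten ∧
        List.Forall₂ (PairP d) vss As} := by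
  induction As with
  | nil =>
      refine SuppIn_mono ?_ one_suppIn
      rintro m (hm : FreeMonoid.toList m = [])
      exact ⟨[], by simpa using hm, List.Forall₂.nil⟩
  | cons A As ih =>
      rw [List.map_cons, List.prod_cons]
      have h := SuppIn.mul (pairElem_suppIn (hAs A (by simp)))
        (ih (fun A' hA' => hAs A' (by simp [hA'])))
      refine SuppIn_mono ?_ h
      rintro m ⟨a, ha, c, ⟨vss, hc, hfa⟩, rfl⟩
      exact ⟨FreeMonoid.toList a :: vss, by simp [FreeMonoid.toList_mul, hc],
        List.Forall₂.cons ha hfa⟩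

lemma prod_pair_suppIn_len (As : List (Finset (Fin d))) :
    (As.map (pairElem d)).prod ∈ SuppIn d
      {m | (FreeMonoid.toList m).length = 2 * As.length} := by
  induction As with
  | nil =>
      refine SuppIn_mono ?_ one_suppIn
      rintro m (hm : FreeMonoid.toList m = [])
      simp [hm]
  | cons A As ih =>
      rw [List.map_cons, List.prod_cons]
      have h := SuppIn.mul (pairElem_suppIn_len A) ih
      refine SuppIn_mono ?_ h
      rintro m ⟨a, ha, c, hc, rfl⟩
      simp only [Set.mem_setOf_eq, FreeMonoid.toList_mul, List.length_append]
      rw [ha, hc, List.length_cons]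
      ring


/-- Words in the support of `Φ_p t`. -/
def GW (d : ℕ) (B : Finset (Fin d)) (As : List (Finset (Fin d))) : Set (FreeMonoid (Fin d)) :=
  {m | ∃ u vss, FreeMonoid.toList m = u ++ List.flatten vss ∧ u.Nodup ∧ u.toFinset = B ∧
    List.Forall₂ (PairP d) vss As}

lemma mul_prod_suppIn {B : Finset (Fin d)} (As : List (Finset (Fin d)))
    (hAs : ∀ A ∈ As, A.card = 2) {t : FA ℤ d} (ht : t ∈ SuppIn d (IW d B)) :
    t * (As.map (pairElem d)).prod ∈ SuppIn d (GW d B As) := by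
  have h := SuppIn.mul ht (prod_pair_suppIn As hAs)
  refine SuppIn_mono ?_ h
  rintro m ⟨a, ha, c, ⟨vss, hc, hfa⟩, rfl⟩
  exact ⟨FreeMonoid.toList a, vss, by simp [FreeMonoid.toList_mul, hc], ha.1, ha.2, hfa⟩

lemma forall₂_mem_left {R : List (Fin d) → Finset (Fin d) → Prop}
    {l₁ : List (List (Fin d))} {l₂ : List (Finset (Fin d))} (h : List.Forall₂ R l₁ l₂)
    {v : List (Fin d)} (hv : v ∈ l₁) : ∃ A ∈ l₂, R v A := by
  induction h with
  | nil => simp at hv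
  | cons h₁ h₂ ih =>
      rcases List.mem_cons.mp hv with rfl | hv
      · exact ⟨_, by simp, h₁⟩
      · obtain ⟨A, hA, hR⟩ := ih hv
        exact ⟨A, by simp [hA], hR⟩

lemma flatten_length_of_forall₂ {vss : List (List (Fin d))} {As : List (Finset (Fin d))}
    (h : List.Forall₂ (PairP d) vss As) : vss.flatten.length = 2 * As.length := by
  induction h with
  | nil => simp
  | cons h₁ h₂ ih =>
      simp only [List.flatten_cons, List.length_append, List.length_cons, ih, h₁.1]
      ring

lemma flatten_inj : ∀ {l₁ l₂ : List (List (Fin d))}, l₁.length = l₂.length →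
    (∀ v ∈ l₁, v.length = 2) → (∀ v ∈ l₂, v.length = 2) →
    l₁.flatten = l₂.flatten → l₁ = l₂ := by
  intro l₁
  induction l₁ with
  | nil =>
      intro l₂ hlen _ _ _
      exact (List.length_eq_zero_iff.mp hlen.symm).symm ▸ rfl
  | cons v l₁ ih =>
      intro l₂ hlen h₁ h₂ hf
      cases l₂ with
      | nil => simp at hlen
      | cons w l₂ =>
          simp only [List.flatten_cons] at hf
          have hvw : v = w ∧ l₁.flatten = l₂.flatten :=
            List.append_inj hf (by rw [h₁ v (by simp), h₂ w (by simp)])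
          have := ih (by simpa using hlen) (fun x hx => h₁ x (by simp [hx]))
            (fun x hx => h₂ x (by simp [hx])) hvw.2
          rw [hvw.1, this]

lemma decompIdx_ext {C : Finset (Fin d)} {b : ℕ} {p q : DecompIdx d C b}
    (h1 : p.B = q.B) (h2 : p.A = q.A) : p = q := by
  cases p; cases q
  cases h1; cases h2
  rfl

lemma GW_unique {C : Finset (Fin d)} {b : ℕ} (p q : DecompIdx d C b)
    {m : FreeMonoid (Fin d)} (hp : m ∈ GW d p.B (List.ofFn p.A))
    (hq : m ∈ GW d q.B (List.ofFn q.A)) : p = q := by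
  obtain ⟨u, vss, he, hnd, hfs, hfa⟩ := hp
  obtain ⟨u', vss', he', hnd', hfs', hfa'⟩ := hq
  have hul : u.length = b := by
    rw [← List.toFinset_card_of_nodup hnd, hfs, p.hB]
  have hul' : u'.length = b := by
    rw [← List.toFinset_card_of_nodup hnd', hfs', q.hB]
  have happ : u ++ vss.flatten = u' ++ vss'.flatten := by rw [← he, ← he']
  obtain ⟨rfl, hflat⟩ := List.append_inj happ (by rw [hul, hul'])
  have hBeq : p.B = q.B := by rw [← hfs, ← hfs']
  have hlen2 : ∀ v ∈ vss, v.length = 2 := fun v hv =>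
    (Exists.choose_spec (forall₂_mem_left hfa hv)).2.1
  have hlen2' : ∀ v ∈ vss', v.length = 2 := fun v hv =>
    (Exists.choose_spec (forall₂_mem_left hfa' hv)).2.1
  have hll : vss.length = vss'.length := by
    rw [List.Forall₂.length_eq hfa, List.Forall₂.length_eq hfa']
    simp
  have hveq : vss = vss' := flatten_inj hll hlen2 hlen2' hflat
  subst hveq
  refine decompIdx_ext hBeq (funext fun i => ?_)
  obtain ⟨hl1, hget⟩ := List.forall₂_iff_get.mp hfa
  obtain ⟨hl1', hget'⟩ := List.forall₂_iff_get.mp hfa'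
  have hi2 : (i : ℕ) < (List.ofFn p.A).length := by
    simp only [List.length_ofFn]; exact i.2
  have hi2' : (i : ℕ) < (List.ofFn q.A).length := by
    simp only [List.length_ofFn]; exact i.2
  have hi : (i : ℕ) < vss.length := by rw [hl1]; exact hi2
  have e1 := (hget (i : ℕ) hi hi2).2.2
  have e1' := (hget' (i : ℕ) hi hi2').2.2
  rw [List.get_ofFn] at e1 e1'
  have c1 : (Fin.cast (List.length_ofFn (f := p.A)) ⟨(i : ℕ), hi2⟩) = i := Fin.ext rfl
  have c1' : (Fin.cast (List.length_ofFn (f := q.A)) ⟨(i : ℕ), hi2'⟩) = i := Fin.ext rfl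
  rw [c1] at e1
  rw [c1'] at e1'
  rw [← e1, ← e1']


lemma GW_nodup_cover {C : Finset (Fin d)} {b : ℕ} (p : DecompIdx d C b)
    {m : FreeMonoid (Fin d)} (hm : m ∈ GW d p.B (List.ofFn p.A)) :
    (FreeMonoid.toList m).Nodup ∧ (FreeMonoid.toList m).toFinset = C := by
  classical
  obtain ⟨u, vss, he, hnd, hfs, hfa⟩ := hm
  obtain ⟨hl1, hget⟩ := List.forall₂_iff_get.mp hfa
  have hll : vss.length = (C.card - b) / 2 := by simpa using hl1
  -- get-level description of vss
  have hget' : ∀ (i : ℕ) (h : i < vss.length),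
      (vss.get ⟨i, h⟩).length = 2 ∧ (vss.get ⟨i, h⟩).Nodup ∧
        (vss.get ⟨i, h⟩).toFinset = p.A ⟨i, by rw [← hll]; exact h⟩ := by
    intro i h
    have h2 : i < (List.ofFn p.A).length := by rw [← hl1]; exact h
    have := hget i h h2
    rw [List.get_ofFn] at this
    exact this
  -- membership in a chunk iff in some A
  have hmemv : ∀ x : Fin d, (x ∈ vss.flatten ↔ ∃ i, x ∈ p.A i) := by
    intro x
    rw [List.mem_flatten]
    constructor
    · rintro ⟨v, hv, hx⟩
      obtain ⟨i, rfl⟩ := List.mem_iff_get.mp hv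
      refine ⟨⟨(i : ℕ), by rw [← hll]; exact i.2⟩, ?_⟩
      rw [← (hget' (i : ℕ) i.2).2.2]
      · simpa using hx
    · rintro ⟨i, hx⟩
      have hi : (i : ℕ) < vss.length := by rw [hll]; exact i.2
      refine ⟨vss.get ⟨(i : ℕ), hi⟩, List.mem_iff_get.mpr ⟨⟨(i : ℕ), hi⟩, rfl⟩, ?_⟩
      rw [← List.mem_toFinset, (hget' (i : ℕ) hi).2.2, Fin.eta]
      exact hx
  constructor
  · rw [he, List.nodup_append]
    refine ⟨hnd, ?_, ?_⟩
    · rw [List.nodup_flatten]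
      constructor
      · intro v hv
        obtain ⟨i, rfl⟩ := List.mem_iff_get.mp hv
        exact (hget' (i : ℕ) i.2).2.1
      · rw [List.pairwise_iff_get]
        intro i j hij
        intro x hx1 hx2
        have hne : (⟨(i : ℕ), by rw [← hll]; exact i.2⟩ : Fin ((C.card - b)/2)) ≠
            ⟨(j : ℕ), by rw [← hll]; exact j.2⟩ := by
          intro hcon
          rw [Fin.mk.injEq] at hcon
          have hij' : (i : ℕ) < (j : ℕ) := hij
          omega
        have hd := p.hAdisj _ _ hne
        have hx1' : x ∈ p.A ⟨(i : ℕ), by rw [← hll]; exact i.2⟩ := by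
          rw [← (hget' (i : ℕ) i.2).2.2, List.mem_toFinset]; exact hx1
        have hx2' : x ∈ p.A ⟨(j : ℕ), by rw [← hll]; exact j.2⟩ := by
          rw [← (hget' (j : ℕ) j.2).2.2, List.mem_toFinset]; exact hx2
        exact Finset.disjoint_left.mp hd hx1' hx2'
    · intro x hxu y hxf hxy
      subst hxy
      have hxB : x ∈ p.B := by rw [← hfs, List.mem_toFinset]; exact hxu
      obtain ⟨i, hxA⟩ := (hmemv x).mp hxf
      exact Finset.disjoint_left.mp (p.hBA i) hxB hxA
  · rw [he]
    apply Finset.ext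
    intro x
    rw [List.toFinset_append, Finset.mem_union, List.mem_toFinset, List.mem_toFinset,
      ← p.hcover, Finset.mem_union, Finset.mem_biUnion]
    constructor
    · rintro (hx | hx)
      · left; rw [← hfs, List.mem_toFinset]; exact hx
      · right
        obtain ⟨i, hi⟩ := (hmemv x).mp hx
        exact ⟨i, Finset.mem_univ i, hi⟩
    · rintro (hx | ⟨i, _, hi⟩)
      · left; rw [← List.mem_toFinset, hfs]; exact hx
      · right; exact (hmemv x).mpr ⟨i, hi⟩

lemma mem_wordsOn_of_suppIn {C : Finset (Fin d)} {f : FA ℤ d}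
    (hf : ∀ m ∈ f.coeff.support, (FreeMonoid.toList m).Nodup ∧ (FreeMonoid.toList m).toFinset = C) :
    f ∈ wordsOn d C := by
  classical
  have hrw : f = ∑ m ∈ f.coeff.support, (f.coeff m) • MonoidAlgebra.single m (1 : ℤ) := by
    conv_lhs => rw [← MonoidAlgebra.sum_coeff_single f]
    rw [Finsupp.sum]
    refine Finset.sum_congr rfl fun m _ => ?_
    rw [MonoidAlgebra.smul_single' (f.coeff m) m 1, mul_one]
  rw [hrw]
  apply Submodule.sum_mem
  intro m hm
  apply Submodule.smul_mem
  apply Submodule.subset_span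
  exact ⟨FreeMonoid.toList m, (hf m hm).1, (hf m hm).2, by rw [wordElem, FreeMonoid.ofList_toList]⟩


lemma ofList_mul (u v : List (Fin d)) :
    FreeMonoid.ofList u * FreeMonoid.ofList v = FreeMonoid.ofList (u ++ v) := rfl

lemma mul_apply_lengths (f g : FA ℤ d) (u v : List (Fin d))
    (hf : ∀ m ∈ f.coeff.support, (FreeMonoid.toList m).length = u.length)
    (hg : ∀ m ∈ g.coeff.support, (FreeMonoid.toList m).length = v.length) :
    (f * g).coeff (FreeMonoid.ofList (u ++ v)) =
      f.coeff (FreeMonoid.ofList u) * g.coeff (FreeMonoid.ofList v) := by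
  classical
  rw [MonoidAlgebra.coeff_mul]
  simp only [Finsupp.sum]
  have key : ∀ a ∈ f.coeff.support, ∀ c ∈ g.coeff.support,
      (if a * c = FreeMonoid.ofList (u ++ v) then f.coeff a * g.coeff c else 0) =
      (if a = FreeMonoid.ofList u then f.coeff a else 0) *
        (if c = FreeMonoid.ofList v then g.coeff c else 0) := by
    intro a ha c hc
    by_cases h : a * c = FreeMonoid.ofList (u ++ v)
    · have htl : FreeMonoid.toList a ++ FreeMonoid.toList c = u ++ v := by
        rw [← FreeMonoid.toList_mul, h, FreeMonoid.toList_ofList]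
      obtain ⟨h1, h2⟩ := List.append_inj htl (hf a ha)
      have ha' : a = FreeMonoid.ofList u := by rw [← h1, FreeMonoid.ofList_toList]
      have hc' : c = FreeMonoid.ofList v := by rw [← h2, FreeMonoid.ofList_toList]
      simp [h, ha', hc']
    · rw [if_neg h]
      by_cases h1 : a = FreeMonoid.ofList u
      · by_cases h2 : c = FreeMonoid.ofList v
        · exfalso; apply h; rw [h1, h2, ofList_mul]
        · simp [h2]
      · simp [h1]
  calc (∑ a ∈ f.coeff.support, ∑ c ∈ g.coeff.support,
          if a * c = FreeMonoid.ofList (u ++ v) then f.coeff a * g.coeff c else 0)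
      = ∑ a ∈ f.coeff.support, ∑ c ∈ g.coeff.support,
          (if a = FreeMonoid.ofList u then f.coeff a else 0) *
            (if c = FreeMonoid.ofList v then g.coeff c else 0) := by
        refine Finset.sum_congr rfl fun a ha => Finset.sum_congr rfl fun c hc => key a ha c hc
    _ = (∑ a ∈ f.coeff.support, if a = FreeMonoid.ofList u then f.coeff a else 0) *
          (∑ c ∈ g.coeff.support, if c = FreeMonoid.ofList v then g.coeff c else 0) := by
        rw [Finset.sum_mul_sum]
    _ = f.coeff (FreeMonoid.ofList u) * g.coeff (FreeMonoid.ofList v) := by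
        rw [Finset.sum_ite_eq' f.coeff.support, Finset.sum_ite_eq' g.coeff.support]
        by_cases h1 : FreeMonoid.ofList u ∈ f.coeff.support
        · by_cases h2 : FreeMonoid.ofList v ∈ g.coeff.support
          · rw [if_pos h1, if_pos h2]
          · rw [if_pos h1, if_neg h2, Finsupp.notMem_support_iff.mp h2, mul_zero]
        · simp [if_neg h1, Finsupp.notMem_support_iff.mp h1]

/-- The canonical pair word of an ordered list of pair sets. -/
def canon (As : List (Finset (Fin d))) : List (Fin d) :=
  (As.map (fun A => A.sort (· ≤ ·))).flatten

lemma canon_length (As : List (Finset (Fin d))) (hAs : ∀ A ∈ As, A.card = 2) :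
    (canon As).length = 2 * As.length := by
  induction As with
  | nil => simp [canon]
  | cons A As ih =>
      simp only [canon, List.map_cons, List.flatten_cons, List.length_append, List.length_cons]
      rw [Finset.length_sort, hAs A (by simp)]
      have := ih (fun A' hA' => hAs A' (by simp [hA']))
      rw [canon] at this
      rw [this]
      ring

lemma pairElem_coeff (A : Finset (Fin d)) (hA : A.card = 2) :
    (pairElem d A).coeff (FreeMonoid.ofList (A.sort (· ≤ ·))) = 1 := by
  classical
  have hlen : (A.sort (· ≤ ·)).length = 2 := by rw [Finset.length_sort, hA]
  obtain ⟨x, y, hxy⟩ : ∃ x y, A.sort (· ≤ ·) = [x, y] := by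
    match h : A.sort (· ≤ ·), hlen with
    | [x, y], _ => exact ⟨x, y, rfl⟩
  have hx : x ∈ A := by
    rw [← Finset.mem_sort (α := Fin d) (· ≤ ·), hxy]; simp
  have hy : y ∈ A := by
    rw [← Finset.mem_sort (α := Fin d) (· ≤ ·), hxy]; simp
  have hnd := Finset.sort_nodup A (· ≤ ·)
  rw [hxy] at hnd
  have hxyne : x ≠ y := by simpa using hnd
  rw [hxy, pairElem]
  rw [MonoidAlgebra.coeff_sum, Finsupp.finset_sum_apply]
  have hterm : ∀ x' ∈ A, (∑ y' ∈ A.erase x', wordElem ℤ d [x', y']).coeff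
      (FreeMonoid.ofList [x, y]) = if x' = x then 1 else 0 := by
    intro x' _
    rw [MonoidAlgebra.coeff_sum, Finsupp.finset_sum_apply]
    have : ∀ y' ∈ A.erase x', (wordElem ℤ d [x', y']).coeff (FreeMonoid.ofList [x, y]) =
        if x' = x ∧ y' = y then 1 else 0 := by
      intro y' _
      rw [wordElem, MonoidAlgebra.coeff_single, Finsupp.single_apply]
      congr 1
      simp only [eq_iff_iff]
      constructor
      · intro h
        have := FreeMonoid.toList_ofList (α := Fin d) [x', y'] ▸ congrArg FreeMonoid.toList h
        simp only [FreeMonoid.toList_ofList] at this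
        exact ⟨(List.cons.injEq _ _ _ _).mp this |>.1, by
          have := (List.cons.injEq _ _ _ _).mp this |>.2
          exact ((List.cons.injEq _ _ _ _).mp this).1⟩
      · rintro ⟨rfl, rfl⟩; rfl
    rw [Finset.sum_congr rfl this]
    by_cases hxx : x' = x
    · rw [if_pos hxx]
      have h2 : ∀ y' ∈ A.erase x', (if x' = x ∧ y' = y then (1 : ℤ) else 0) =
          (if y' = y then 1 else 0) := fun y' _ => by simp [hxx]
      rw [Finset.sum_congr rfl h2, Finset.sum_ite_eq' (A.erase x'),
        if_pos (Finset.mem_erase.mpr ⟨by rw [hxx]; exact hxyne.symm, hy⟩)]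
    · rw [if_neg hxx]
      apply Finset.sum_eq_zero
      intro y' _
      rw [if_neg (by tauto)]
  rw [Finset.sum_congr rfl hterm, Finset.sum_ite_eq' A, if_pos hx]

lemma prod_pair_coeff (As : List (Finset (Fin d))) (hAs : ∀ A ∈ As, A.card = 2) :
    ((As.map (pairElem d)).prod).coeff (FreeMonoid.ofList (canon As)) = 1 := by
  induction As with
  | nil =>
      classical
      show (1 : FA ℤ d).coeff (FreeMonoid.ofList []) = 1
      rw [MonoidAlgebra.one_def, MonoidAlgebra.coeff_single, Finsupp.single_apply, if_pos (by rfl)]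
  | cons A As ih =>
      have hcanon : canon (A :: As) = A.sort (· ≤ ·) ++ canon As := by
        simp [canon]
      rw [List.map_cons, List.prod_cons, hcanon]
      rw [mul_apply_lengths _ _ _ _
        (fun m hm => by
          have := (pairElem_suppIn_len A) m hm
          rw [this, Finset.length_sort, hAs A (by simp)])
        (fun m hm => by
          have := (prod_pair_suppIn_len As) m hm
          rw [this, canon_length As (fun A' hA' => hAs A' (by simp [hA']))])]
      rw [pairElem_coeff A (hAs A (by simp)), ih (fun A' hA' => hAs A' (by simp [hA'])), mul_one]

lemma mul_prod_coeff {B : Finset (Fin d)} (As : List (Finset (Fin d)))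
    (hAs : ∀ A ∈ As, A.card = 2) {t : FA ℤ d} (ht : t ∈ SuppIn d (IW d B))
    (u : List (Fin d)) (hlen : u.length = B.card) :
    (t * (As.map (pairElem d)).prod).coeff (FreeMonoid.ofList (u ++ canon As)) =
      t.coeff (FreeMonoid.ofList u) := by
  rw [mul_apply_lengths _ _ _ _
    (fun m hm => by rw [IW_length (ht m hm), hlen])
    (fun m hm => by
      rw [(prod_pair_suppIn_len As) m hm, canon_length As hAs]),
    prod_pair_coeff As hAs, mul_one]


lemma wordElem_append (u v : List (Fin d)) :
    wordElem ℤ d (u ++ v) = wordElem ℤ d u * wordElem ℤ d v := by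
  rw [wordElem, wordElem, wordElem, MonoidAlgebra.single_mul_single, ofList_mul, mul_one]

lemma wordElem_nil : wordElem ℤ d [] = 1 := by
  rw [wordElem, MonoidAlgebra.one_def]; rfl

lemma Dword_nil : Dword ℤ d [] = 0 := by
  rw [Dword]; exact Finset.sum_empty

lemma Dword_cons (a : Fin d) (w : List (Fin d)) :
    Dword ℤ d (a :: w) = wordElem ℤ d w - wordElem ℤ d [a] * Dword ℤ d w := by
  rw [Dword]
  show (∑ j : Fin (w.length + 1), ((-1 : ℤ) ^ (j : ℕ)) •
      wordElem ℤ d ((a :: w).eraseIdx (j : ℕ))) = _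
  rw [Fin.sum_univ_succ]
  simp only [Fin.val_zero, pow_zero, one_smul, List.eraseIdx_cons_zero, Fin.val_succ,
    List.eraseIdx_cons_succ]
  rw [Dword, Finset.mul_sum, sub_eq_add_neg, ← Finset.sum_neg_distrib]
  congr 1
  refine Finset.sum_congr rfl fun j _ => ?_
  have h1 : wordElem ℤ d (a :: w.eraseIdx (j : ℕ)) =
      wordElem ℤ d [a] * wordElem ℤ d (w.eraseIdx (j : ℕ)) := by
    rw [← wordElem_append]; rfl
  rw [h1, pow_succ]
  simp only [smul_smul, mul_smul_comm, smul_mul_assoc, mul_assoc]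
  module

lemma Dword_append (u v : List (Fin d)) :
    Dword ℤ d (u ++ v) = Dword ℤ d u * wordElem ℤ d v +
      ((-1 : ℤ) ^ u.length) • (wordElem ℤ d u * Dword ℤ d v) := by
  induction u with
  | nil =>
      simp [Dword_nil, wordElem_nil]
  | cons a u ih =>
      rw [List.cons_append, Dword_cons, ih, Dword_cons, wordElem_append,
        List.length_cons]
      have e1 : wordElem ℤ d (a :: u) = wordElem ℤ d [a] * wordElem ℤ d u := by
        rw [← wordElem_append]; rfl
      rw [e1, pow_succ]
      simp only [mul_add, add_mul, sub_mul, mul_sub, smul_add, smul_sub, smul_smul,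
        mul_smul_comm, smul_mul_assoc, mul_assoc]
      module

lemma Ddiff_single (m : FreeMonoid (Fin d)) (r : ℤ) :
    Ddiff ℤ d (MonoidAlgebra.single m r) = r • Dword ℤ d (FreeMonoid.toList m) := by
  rw [Ddiff, LinearMap.comp_apply]
  erw [Finsupp.lsum_single (S := ℤ)]
  rw [LinearMap.toSpanSingleton_apply]

lemma single_eq_smul_wordElem (m : FreeMonoid (Fin d)) (r : ℤ) :
    MonoidAlgebra.single m r = r • wordElem ℤ d (FreeMonoid.toList m) := by
  rw [wordElem, FreeMonoid.ofList_toList, MonoidAlgebra.smul_single', mul_one]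

lemma D_single_mul (m : FreeMonoid (Fin d)) (c : ℤ) (g : FA ℤ d) :
    Ddiff ℤ d (MonoidAlgebra.single m c * g) =
      Ddiff ℤ d (MonoidAlgebra.single m c) * g +
      ((-1 : ℤ) ^ (FreeMonoid.toList m).length) •
        (MonoidAlgebra.single m c * Ddiff ℤ d g) := by
  induction g using MonoidAlgebra.induction_linear with
  | zero => simp
  | add f g ihf ihg =>
      rw [mul_add, map_add, ihf, ihg, map_add, mul_add, mul_add, smul_add]
      abel
  | single a b =>
      rw [MonoidAlgebra.single_mul_single, Ddiff_single, Ddiff_single, Ddiff_single]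
      have htl : FreeMonoid.toList (m * a) = FreeMonoid.toList m ++ FreeMonoid.toList a :=
        FreeMonoid.toList_mul m a
      rw [htl, Dword_append, single_eq_smul_wordElem m c, single_eq_smul_wordElem a b]
      simp only [mul_add, add_mul, smul_add, smul_smul, mul_smul_comm, smul_mul_assoc,
        mul_assoc]
      module

lemma D_mul_homog (a : ℕ) (f g : FA ℤ d)
    (hf : ∀ m ∈ f.coeff.support, (FreeMonoid.toList m).length = a) :
    Ddiff ℤ d (f * g) = Ddiff ℤ d f * g + ((-1 : ℤ) ^ a) • (f * Ddiff ℤ d g) := by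
  classical
  have hrw : f = ∑ m ∈ f.coeff.support, MonoidAlgebra.single m (f.coeff m) := by
    conv_lhs => rw [← MonoidAlgebra.sum_coeff_single f]
    rfl
  calc Ddiff ℤ d (f * g)
      = ∑ m ∈ f.coeff.support, Ddiff ℤ d (MonoidAlgebra.single m (f.coeff m) * g) := by
        conv_lhs => rw [hrw, Finset.sum_mul, map_sum]
    _ = ∑ m ∈ f.coeff.support, (Ddiff ℤ d (MonoidAlgebra.single m (f.coeff m)) * g +
          ((-1 : ℤ) ^ a) • (MonoidAlgebra.single m (f.coeff m) * Ddiff ℤ d g)) := by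
        refine Finset.sum_congr rfl fun m hm => ?_
        rw [D_single_mul, hf m hm]
    _ = Ddiff ℤ d f * g + ((-1 : ℤ) ^ a) • (f * Ddiff ℤ d g) := by
        rw [Finset.sum_add_distrib, ← Finset.sum_mul, ← map_sum, ← Finset.smul_sum,
          ← Finset.sum_mul, ← hrw]

lemma D_pairElem (A : Finset (Fin d)) : Ddiff ℤ d (pairElem d A) = 0 := by
  classical
  have hD2 : ∀ x y : Fin d, Ddiff ℤ d (wordElem ℤ d [x, y]) =
      wordElem ℤ d [y] - wordElem ℤ d [x] := by
    intro x y
    rw [wordElem, Ddiff_single, one_smul]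
    show Dword ℤ d [x, y] = _
    rw [Dword]
    show (∑ j : Fin 2, ((-1 : ℤ) ^ (j : ℕ)) • wordElem ℤ d ([x, y].eraseIdx (j : ℕ))) = _
    rw [Fin.sum_univ_two]
    simp [sub_eq_add_neg]
  rw [pairElem, map_sum]
  have : ∀ x ∈ A, Ddiff ℤ d (∑ y ∈ A.erase x, wordElem ℤ d [x, y]) =
      ∑ y ∈ A.erase x, (wordElem ℤ d [y] - wordElem ℤ d [x]) := by
    intro x _
    rw [map_sum]
    exact Finset.sum_congr rfl fun y _ => hD2 x y
  rw [Finset.sum_congr rfl this]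
  have hsplit : ∑ x ∈ A, ∑ y ∈ A.erase x, (wordElem ℤ d [y] - wordElem ℤ d [x]) =
      (∑ x ∈ A, ∑ y ∈ A.erase x, wordElem ℤ d [y]) -
      (∑ x ∈ A, ∑ y ∈ A.erase x, wordElem ℤ d [x]) := by
    rw [← Finset.sum_sub_distrib]
    exact Finset.sum_congr rfl fun x _ => by rw [Finset.sum_sub_distrib]
  rw [hsplit]
  have hcomm : (∑ x ∈ A, ∑ y ∈ A.erase x, wordElem ℤ d [y]) =
      ∑ y ∈ A, ∑ x ∈ A.erase y, wordElem ℤ d [y] := by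
    apply Finset.sum_comm'
    intro x y
    constructor
    · rintro ⟨hx, hy⟩
      exact ⟨Finset.mem_erase.mpr ⟨fun h => (Finset.mem_erase.mp hy).1 h.symm, hx⟩,
        Finset.mem_of_mem_erase hy⟩
    · rintro ⟨hx, hy⟩
      exact ⟨Finset.mem_of_mem_erase hx,
        Finset.mem_erase.mpr ⟨fun h => (Finset.mem_erase.mp hx).1 h.symm, hy⟩⟩
  rw [hcomm, sub_self]

lemma prod_pair_ker (As : List (Finset (Fin d))) (a : ℕ) (t : FA ℤ d)
    (ht : ∀ m ∈ t.coeff.support, (FreeMonoid.toList m).length = a)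
    (hD : Ddiff ℤ d t = 0) :
    Ddiff ℤ d (t * (As.map (pairElem d)).prod) = 0 := by
  induction As generalizing t a with
  | nil => simpa using hD
  | cons A As ih =>
      rw [List.map_cons, List.prod_cons, ← mul_assoc]
      refine ih (a + 2) (t * pairElem d A) ?_ ?_
      · intro m hm
        have h := SuppIn.mul (S := {m | (FreeMonoid.toList m).length = a})
          (T := {m | (FreeMonoid.toList m).length = 2})
          (by rw [mem_SuppIn]; exact ht) (pairElem_suppIn_len A)
        rw [mem_SuppIn] at h
        obtain ⟨x, hx, y, hy, rfl⟩ := h m hm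
        rw [FreeMonoid.toList_mul, List.length_append, hx, hy]
      · rw [D_mul_homog a _ _ ht, hD, D_pairElem, zero_mul, mul_zero, smul_zero, add_zero]


lemma Phi_apply_of {C : Finset (Fin d)} {b : ℕ} (p : DecompIdx d C b) (t : ↥(TT d p.B)) :
    Phi d C b (DirectSum.of (fun p : DecompIdx d C b => ↥(TT d p.B)) p t) =
      (t : FA ℤ d) * ((List.ofFn p.A).map (pairElem d)).prod := by
  rw [Phi, ← DirectSum.lof_eq_of ℤ, DirectSum.toModule_lof]
  simp only [LinearMap.coe_comp, Function.comp_apply, Submodule.coe_subtype,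
    LinearMap.mulRight_apply]
  rw [List.map_ofFn]
  rfl

theorem aux_main (d b : ℕ) (hb : b ≤ d) (hpar : b % 2 = d % 2) :
    Function.Injective (Phi d Finset.univ b) ∧
    LinearMap.range (Phi d Finset.univ b) ≤ TT d Finset.univ ∧
    Nonempty ((DirectSum (DecompIdx d Finset.univ b) fun p => ↥(TT d p.B)) ≃ₗ[ℤ]
      ↥(LinearMap.range (Phi d Finset.univ b))) := by
  classical
  have hPhi : ∀ x : DirectSum (DecompIdx d Finset.univ b) fun p => ↥(TT d p.B),
      Phi d Finset.univ b x = ∑ p ∈ DFinsupp.support x,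
        (x p : FA ℤ d) * ((List.ofFn p.A).map (pairElem d)).prod := by
    intro x
    conv_lhs => rw [← DirectSum.sum_support_of x]
    rw [map_sum]
    exact Finset.sum_congr rfl fun p _ => Phi_apply_of p (x p)
  have hAs2 : ∀ p : DecompIdx d Finset.univ b, ∀ A ∈ List.ofFn p.A, A.card = 2 := by
    intro p A hA
    obtain ⟨i, rfl⟩ := List.mem_ofFn.mp hA
    exact p.hA i
  have hIWmem : ∀ p : DecompIdx d Finset.univ b, ∀ t : ↥(TT d p.B),
      (t : FA ℤ d) ∈ SuppIn d (IW d p.B) := by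
    intro p t
    exact wordsOn_le_suppIn p.B (Submodule.mem_inf.mp t.2).1
  have hsupp : ∀ (p : DecompIdx d Finset.univ b) (t : ↥(TT d p.B)),
      ((t : FA ℤ d) * ((List.ofFn p.A).map (pairElem d)).prod) ∈
        SuppIn d (GW d p.B (List.ofFn p.A)) := by
    intro p t
    exact mul_prod_suppIn (List.ofFn p.A) (hAs2 p) (hIWmem p t)
  have hinj : Function.Injective ⇑(Phi d Finset.univ b) := by
    rw [← LinearMap.ker_eq_bot, LinearMap.ker_eq_bot']
    intro x hx
    refine DFinsupp.ext fun q => ?_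
    refine Subtype.ext ?_
    have hz : ((0 : DirectSum (DecompIdx d Finset.univ b) fun p => ↥(TT d p.B)) q : FA ℤ d)
        = 0 := rfl
    rw [hz]
    ext g
    rw [MonoidAlgebra.coeff_zero, Finsupp.coe_zero, Pi.zero_apply]
    by_cases hg : g ∈ (x q : FA ℤ d).coeff.support
    swap
    · exact Finsupp.notMem_support_iff.mp hg
    have hq_supp : q ∈ DFinsupp.support x := by
      rw [DFinsupp.mem_support_iff]
      intro h0
      rw [h0] at hg
      simp at hg
    have hIW := hIWmem q (x q)
    rw [mem_SuppIn] at hIW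
    have hgIW := hIW g hg
    have h0 : (Phi d Finset.univ b x).coeff (FreeMonoid.ofList
        (FreeMonoid.toList g ++ canon (List.ofFn q.A))) = 0 := by
      rw [hx]
      rfl
    rw [hPhi x, MonoidAlgebra.coeff_sum, Finsupp.finset_sum_apply] at h0
    have hterm : ∀ p ∈ DFinsupp.support x, p ≠ q →
        ((x p : FA ℤ d) * ((List.ofFn p.A).map (pairElem d)).prod).coeff
          (FreeMonoid.ofList (FreeMonoid.toList g ++ canon (List.ofFn q.A))) = 0 := by
      intro p _ hpq
      by_contra hne
      have hGsupp := Finsupp.mem_support_iff.mpr hne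
      have h1 := (hsupp p (x p)) _ hGsupp
      have h2 : (FreeMonoid.ofList (FreeMonoid.toList g ++ canon (List.ofFn q.A))) ∈
          GW d q.B (List.ofFn q.A) := by
        refine ⟨FreeMonoid.toList g, (List.ofFn q.A).map (fun A => A.sort (· ≤ ·)),
          by rw [FreeMonoid.toList_ofList]; rfl, hgIW.1, hgIW.2, ?_⟩
        rw [List.forall₂_map_left_iff]
        rw [List.forall₂_same]
        intro A hA
        exact ⟨by rw [Finset.length_sort, hAs2 q A hA], Finset.sort_nodup A _,
          Finset.sort_toFinset A _⟩
      exact hpq (GW_unique p q h1 h2)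
    rw [Finset.sum_eq_single_of_mem q hq_supp hterm] at h0
    rw [mul_prod_coeff (List.ofFn q.A) (hAs2 q) (hIWmem q (x q)) (FreeMonoid.toList g)
      (IW_length hgIW)] at h0
    rw [FreeMonoid.ofList_toList] at h0
    exact h0
  refine ⟨hinj, ?_, ⟨LinearEquiv.ofInjective _ hinj⟩⟩
  rintro y ⟨x, rfl⟩
  rw [hPhi x]
  apply Submodule.sum_mem
  intro p _
  rw [TT]
  rw [Submodule.mem_inf]
  constructor
  · apply mem_wordsOn_of_suppIn
    intro m hm
    exact GW_nodup_cover p ((hsupp p (x p)) m hm)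
  · rw [LinearMap.mem_ker]
    apply prod_pair_ker (List.ofFn p.A) p.B.card
    · intro m hm
      have := hIWmem p (x p)
      rw [mem_SuppIn] at this
      exact IW_length (this m hm)
    · have := (Submodule.mem_inf.mp (x p).2).2
      rwa [LinearMap.mem_ker] at this

end Scratch

/-- `Φ_b (= Φ_b^{[d]})` is injective, its image `T_d^b` is contained in `T_d`, and hence
`T_d^b` is isomorphic to the direct sum over ordered decompositions of the groups `T_B`. -/
theorem Phi_injective_and_image_in_Td (d b : ℕ) (hb : b ≤ d) (hpar : b % 2 = d % 2) :
    Function.Injective (Phi d Finset.univ b) ∧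
    LinearMap.range (Phi d Finset.univ b) ≤ TT d Finset.univ ∧
    Nonempty ((DirectSum (DecompIdx d Finset.univ b) fun p => ↥(TT d p.B)) ≃ₗ[ℤ]
      ↥(LinearMap.range (Phi d Finset.univ b))) :=
  Scratch.aux_main d b hb hpar
end
end
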